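/- If X is a strongly regular graph and i≠j, i'≠j' are pairs of vertices with i adjacent to j and i' adjacent to j', then φ(X\{i,j}, t) = φ(X\{i',j'}, t); similarly for both pairs non-adjacent. -/

import Mathlib

open Matrix Polynomial SimpleGraph Finset

noncomputable section SRGAux

/-- Denominator cubic. -/
def Df (k a c : ℕ) (t : ℝ) : ℝ := (t^2 - a*t - k)*(t - k + c) - t*c*((k:ℝ)-1-a)
def βf (k a c : ℕ) (t : ℝ) : ℝ := (t - k + c)/(Df k a c t)
def γf (k a c : ℕ) (t : ℝ) : ℝ := c/(Df k a c t)
def αf (k a c : ℕ) (t : ℝ) : ℝ := ((t-a)*(t - k + c) - ((k:ℝ)-1-a)*c)/(Df k a c t)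

/-- Denominator cubic, as a polynomial. -/
def DP (k a c : ℕ) : Polynomial ℝ :=
  (Polynomial.X^2 - Polynomial.C (a:ℝ) * Polynomial.X - Polynomial.C (k:ℝ))
    * (Polynomial.X - Polynomial.C ((k:ℝ) - c))
  - Polynomial.C ((c:ℝ) * ((k:ℝ)-1-a)) * Polynomial.X

lemma DP_eval (k a c : ℕ) (t : ℝ) : (DP k a c).eval t = Df k a c t := by
  simp [DP, Df]; ring

lemma DP_ne_zero (k a c : ℕ) : DP k a c ≠ 0 := by
  have h3 : (DP k a c).natDegree = 3 := by
    unfold DP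
    compute_degree!
  intro h
  rw [h] at h3
  simp at h3

section Graph

variable {v k a c : ℕ} (X : SimpleGraph (Fin v)) [DecidableRel X.Adj]

lemma row_sum' (h : X.IsSRGWith v k a c) (x : Fin v) :
    ∑ y, X.adjMatrix ℝ x y = (k : ℝ) := by
  have := adjMatrix_mulVec_const_apply_of_regular (α := ℝ) (a := 1) h.regular (v := x)
  simpa [mulVec, dotProduct] using this

lemma complAdj : Xᶜ.adjMatrix ℝ = (X.adjMatrix ℝ).compl := by
  classical
  ext x y
  simp only [Matrix.compl, adjMatrix_apply, compl_adj, Matrix.of_apply]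
  by_cases hxy : x = y <;> by_cases hA : X.Adj x y <;> simp [hxy, hA]

lemma oneAC : (1 : Matrix (Fin v) (Fin v) ℝ) + X.adjMatrix ℝ + Xᶜ.adjMatrix ℝ
    = Matrix.of fun _ _ => (1:ℝ) := by
  classical
  rw [complAdj, one_add_adjMatrix_add_compl_adjMatrix_eq_allOnes]
  rfl

lemma AJ (h : X.IsSRGWith v k a c) :
    X.adjMatrix ℝ * (1 + X.adjMatrix ℝ + Xᶜ.adjMatrix ℝ)
      = (k : ℝ) • (1 + X.adjMatrix ℝ + Xᶜ.adjMatrix ℝ) := by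
  classical
  rw [oneAC]
  ext x y
  simp only [Matrix.mul_apply, Matrix.of_apply, mul_one, Matrix.smul_apply, smul_eq_mul]
  simpa using row_sum' X h x

lemma Asq (h : X.IsSRGWith v k a c) :
    X.adjMatrix ℝ * X.adjMatrix ℝ
      = (k : ℝ) • (1 : Matrix (Fin v) (Fin v) ℝ) + (a : ℝ) • X.adjMatrix ℝ
        + (c : ℝ) • Xᶜ.adjMatrix ℝ := by
  have := h.matrix_eq (α := ℝ)
  rw [pow_two] at this
  rw [this]
  simp [Nat.cast_smul_eq_nsmul]

lemma AC (h : X.IsSRGWith v k a c) :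
    X.adjMatrix ℝ * Xᶜ.adjMatrix ℝ
      = ((k : ℝ) - 1 - a) • X.adjMatrix ℝ + ((k : ℝ) - c) • Xᶜ.adjMatrix ℝ := by
  have h1 := AJ X h
  rw [mul_add, mul_add, mul_one, Asq X h] at h1
  have : X.adjMatrix ℝ * Xᶜ.adjMatrix ℝ
      = (k:ℝ) • (1 + X.adjMatrix ℝ + Xᶜ.adjMatrix ℝ) - X.adjMatrix ℝ
        - ((k : ℝ) • 1 + (a : ℝ) • X.adjMatrix ℝ + (c : ℝ) • Xᶜ.adjMatrix ℝ) := by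
    rw [← h1]; abel
  rw [this]
  module

/-- Candidate inverse of `t•1 - A`. -/
def Nmat (t : ℝ) : Matrix (Fin v) (Fin v) ℝ :=
  αf k a c t • (1 : Matrix (Fin v) (Fin v) ℝ) + βf k a c t • X.adjMatrix ℝ
    + γf k a c t • Xᶜ.adjMatrix ℝ

lemma MN (h : X.IsSRGWith v k a c) (t : ℝ) (hD : Df k a c t ≠ 0) :
    (t • (1 : Matrix (Fin v) (Fin v) ℝ) - X.adjMatrix ℝ)
      * Nmat X (k := k) (a := a) (c := c) t = 1 := by
  rw [Nmat, sub_mul, smul_mul_assoc, one_mul, mul_add, mul_add, mul_smul_comm, mul_smul_comm,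
    mul_smul_comm, mul_one, Asq X h, AC X h]
  have e1 : αf k a c t * t - βf k a c t * k = 1 := by
    rw [αf, βf]; field_simp; rw [Df]; ring
  have e2 : t * βf k a c t - (αf k a c t + βf k a c t * a + γf k a c t * ((k:ℝ)-1-a)) = 0 := by
    rw [αf, βf, γf]; field_simp; ring
  have e3 : t * γf k a c t - (βf k a c t * c + γf k a c t * ((k:ℝ)-c)) = 0 := by
    rw [βf, γf]; field_simp; ring
  match_scalars
  · linarith [e1]
  · linarith [e2]
  · linarith [e3]

lemma Nmat_apply (t : ℝ) (x y : Fin v) :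
    Nmat X (k := k) (a := a) (c := c) t x y
      = if x = y then αf k a c t else
          (if X.Adj x y then βf k a c t else γf k a c t) := by
  simp only [Nmat, Matrix.add_apply, Matrix.smul_apply, Matrix.one_apply, adjMatrix_apply,
    compl_adj, smul_eq_mul]
  by_cases hxy : x = y
  · subst hxy; simp
  · by_cases hA : X.Adj x y <;> simp [hxy, hA]

end Graph

/-- Jacobi-style identity via Schur complements. -/
lemma jacobi {n : Type*} [Fintype n] [DecidableEq n] (p : n → Prop) [DecidablePred p]
    (M N : Matrix n n ℝ) (hMN : M * N = 1)
    (hD : (M.submatrix (fun x : {x // ¬ p x} => (x : n))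
      (fun x : {x // ¬ p x} => (x : n))).det ≠ 0) :
    (M.submatrix (fun x : {x // ¬ p x} => (x : n)) (fun x : {x // ¬ p x} => (x : n))).det
      = M.det * (N.submatrix (fun x : {x // p x} => (x : n))
          (fun x : {x // p x} => (x : n))).det := by
  classical
  set e : {x // p x} ⊕ {x // ¬ p x} ≃ n := Equiv.sumCompl p with he
  set M' := M.submatrix e e with hM'
  set P' := N.submatrix e e with hP'
  set E := M.submatrix (fun x : {x // p x} => (x : n)) (fun x : {x // p x} => (x : n)) with hE
  set B := M.submatrix (fun x : {x // p x} => (x : n)) (fun x : {x // ¬ p x} => (x : n)) with hB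
  set C := M.submatrix (fun x : {x // ¬ p x} => (x : n)) (fun x : {x // p x} => (x : n)) with hC
  set D := M.submatrix (fun x : {x // ¬ p x} => (x : n)) (fun x : {x // ¬ p x} => (x : n)) with hD'
  set W := N.submatrix (fun x : {x // p x} => (x : n)) (fun x : {x // p x} => (x : n)) with hW
  set Q := N.submatrix (fun x : {x // p x} => (x : n)) (fun x : {x // ¬ p x} => (x : n)) with hQ
  set R := N.submatrix (fun x : {x // ¬ p x} => (x : n)) (fun x : {x // p x} => (x : n)) with hR
  set Z := N.submatrix (fun x : {x // ¬ p x} => (x : n)) (fun x : {x // ¬ p x} => (x : n)) with hZ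
  have hM'b : M' = fromBlocks E B C D := by
    ext (x|x) (y|y) <;> rfl
  have hP'b : P' = fromBlocks W Q R Z := by
    ext (x|x) (y|y) <;> rfl
  have hmul : M' * P' = 1 := by
    rw [hM', hP', Matrix.submatrix_mul_equiv, hMN, Matrix.submatrix_one_equiv]
  rw [hM'b, hP'b, Matrix.fromBlocks_multiply, ← Matrix.fromBlocks_one] at hmul
  rw [Matrix.fromBlocks_inj] at hmul
  have eq1 : E * W + B * R = 1 := hmul.1
  have eq2 : C * W + D * R = 0 := hmul.2.2.1
  have hDinv : Invertible D := D.invertibleOfIsUnitDet (isUnit_iff_ne_zero.mpr hD)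
  have hR : R = -(D⁻¹ * (C * W)) := by
    have : D * R = -(C * W) := by
      rw [← neg_eq_iff_eq_neg] ; linear_combination (norm := noncomm_ring) -eq2
    calc R = D⁻¹ * (D * R) := by
            rw [← Matrix.mul_assoc, Matrix.nonsing_inv_mul D (isUnit_iff_ne_zero.mpr hD),
              Matrix.one_mul]
      _ = -(D⁻¹ * (C * W)) := by rw [this, Matrix.mul_neg]
  have hSchur : (E - B * D⁻¹ * C) * W = 1 := by
    rw [Matrix.sub_mul]
    have : B * D⁻¹ * C * W = B * (D⁻¹ * (C * W)) := by
      rw [Matrix.mul_assoc, Matrix.mul_assoc]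
    rw [this]
    have hEW : E * W = 1 - B * R := by rw [← eq1]; abel
    rw [hEW, hR, Matrix.mul_neg]
    abel
  have hdetM : M.det = D.det * (E - B * D⁻¹ * C).det := by
    have h1 : M.det = M'.det := (Matrix.det_submatrix_equiv_self e M).symm
    rw [h1, hM'b, Matrix.det_fromBlocks₂₂, Matrix.invOf_eq_nonsing_inv]
  have hdetSW : (E - B * D⁻¹ * C).det * W.det = 1 := by
    rw [← Matrix.det_mul, hSchur, Matrix.det_one]
  calc D.det = D.det * ((E - B * D⁻¹ * C).det * W.det) := by rw [hdetSW, mul_one]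
    _ = M.det * W.det := by rw [hdetM]; ring

lemma eval_charpoly' {n : Type*} [Fintype n] [DecidableEq n] (B : Matrix n n ℝ) (t : ℝ) :
    (B.charpoly).eval t = (t • (1 : Matrix n n ℝ) - B).det := by
  rw [Matrix.charpoly, ← Polynomial.coe_evalRingHom, RingHom.map_det]
  congr 1
  ext x y
  by_cases hxy : x = y <;>
    simp [hxy, charmatrix_apply, Matrix.one_apply, diagonal_apply, Matrix.map_apply]

section Key

variable {v k a c : ℕ} (X : SimpleGraph (Fin v)) [DecidableRel X.Adj]

lemma det_ne (h : X.IsSRGWith v k a c) (p : Fin v → Prop) [DecidablePred p]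
    (t : ℝ) (ht : (k : ℝ) < t) :
    (t • (1 : Matrix {x // p x} {x // p x} ℝ)
      - (X.adjMatrix ℝ).submatrix (fun x : {x // p x} => (x : Fin v))
          (fun x : {x // p x} => (x : Fin v))).det ≠ 0 := by
  apply det_ne_zero_of_sum_row_lt_diag
  intro x
  have hdiag : (t • (1 : Matrix {x // p x} {x // p x} ℝ)
      - (X.adjMatrix ℝ).submatrix (fun x : {x // p x} => (x : Fin v))
          (fun x : {x // p x} => (x : Fin v))) x x = t := by
    simp [Matrix.one_apply]
  rw [hdiag]
  have hk : (0:ℝ) ≤ (k:ℝ) := by positivity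
  have ht0 : (0:ℝ) < t := lt_of_le_of_lt hk ht
  rw [Real.norm_eq_abs, abs_of_pos ht0]
  have hoff : ∀ y ∈ Finset.univ.erase x,
      ‖(t • (1 : Matrix {x // p x} {x // p x} ℝ)
        - (X.adjMatrix ℝ).submatrix (fun x : {x // p x} => (x : Fin v))
            (fun x : {x // p x} => (x : Fin v))) x y‖ = X.adjMatrix ℝ x.1 y.1 := by
    intro y hy
    have hxy : x ≠ y := (Finset.ne_of_mem_erase hy).symm
    simp only [Matrix.sub_apply, Matrix.smul_apply, Matrix.one_apply_ne hxy, smul_zero,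
      Matrix.submatrix_apply, zero_sub, Real.norm_eq_abs, abs_neg]
    exact abs_of_nonneg (by simp [adjMatrix_apply]; positivity)
  rw [Finset.sum_congr rfl hoff]
  have hinj : Function.Injective (fun y : {x // p x} => (y : Fin v)) := Subtype.coe_injective
  calc ∑ y ∈ Finset.univ.erase x, X.adjMatrix ℝ x.1 y.1
      = ∑ z ∈ (Finset.univ.erase x).image (fun y : {x // p x} => (y : Fin v)),
          X.adjMatrix ℝ x.1 z := by
        rw [Finset.sum_image (fun a _ b _ hab => hinj hab)]
    _ ≤ ∑ z ∈ Finset.univ.erase x.1, X.adjMatrix ℝ x.1 z := by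
        apply Finset.sum_le_sum_of_subset_of_nonneg
        · intro z hz
          simp only [Finset.mem_image, Finset.mem_erase] at hz ⊢
          obtain ⟨y, hy, rfl⟩ := hz
          exact ⟨fun hc => hy.1 (Subtype.ext hc), Finset.mem_univ _⟩
        · intro z _ _
          simp [adjMatrix_apply]; positivity
    _ = (k : ℝ) := by
        rw [Finset.sum_erase_eq_sub (Finset.mem_univ _), row_sum' X h]
        simp
    _ < t := ht

/-- For `t` beyond the spectral data, the evaluation of the charpoly of the
pair-deleted matrix factors. -/
lemma key (h : X.IsSRGWith v k a c) (i j : Fin v) (hij : i ≠ j)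
    (t : ℝ) (ht : (k : ℝ) < t) (hD : Df k a c t ≠ 0) :
    (((X.adjMatrix ℝ).submatrix
        (fun x : ↥(({i, j} : Finset (Fin v))ᶜ) => (x : Fin v))
        (fun x : ↥(({i, j} : Finset (Fin v))ᶜ) => (x : Fin v))).charpoly).eval t
      = ((X.adjMatrix ℝ).charpoly).eval t
        * ((αf k a c t)^2 - (if X.Adj i j then βf k a c t else γf k a c t)^2) := by
  set S : Finset (Fin v) := {i, j} with hS
  set p : Fin v → Prop := fun x => x ∈ S with hp
  rw [eval_charpoly', eval_charpoly']
  -- transfer LHS to the subtype {x // ¬ p x}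
  set e' : ↥(Sᶜ) ≃ {x // ¬ p x} := Equiv.subtypeEquivRight (fun x => by simp [hp]) with he'
  have hLHS : (t • (1 : Matrix ↥(Sᶜ) ↥(Sᶜ) ℝ)
      - (X.adjMatrix ℝ).submatrix (fun x : ↥(Sᶜ) => (x : Fin v)) (fun x : ↥(Sᶜ) => (x : Fin v)))
      = ((t • (1 : Matrix {x // ¬ p x} {x // ¬ p x} ℝ)
        - (X.adjMatrix ℝ).submatrix (fun x : {x // ¬ p x} => (x : Fin v))
            (fun x : {x // ¬ p x} => (x : Fin v))).submatrix e' e') := by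
    ext x y
    have hco : ((e' x : {x // ¬ p x}) : Fin v) = (x : Fin v) := by
      simp [he', Equiv.subtypeEquivRight]; rfl
    have hco' : ((e' y : {x // ¬ p x}) : Fin v) = (y : Fin v) := by
      simp [he', Equiv.subtypeEquivRight]; rfl
    by_cases hxy : x = y
    · subst hxy; simp [Matrix.one_apply, hco]
    · have hne : e' x ≠ e' y := fun hc => hxy (e'.injective hc)
      simp [Matrix.one_apply, hxy, hne, hco, hco']
  rw [hLHS, Matrix.det_submatrix_equiv_self]
  -- rewrite `t•1 - submatrix` as submatrix of `t•1 - A`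
  have hsub : (t • (1 : Matrix {x // ¬ p x} {x // ¬ p x} ℝ)
      - (X.adjMatrix ℝ).submatrix (fun x : {x // ¬ p x} => (x : Fin v))
          (fun x : {x // ¬ p x} => (x : Fin v)))
      = (t • (1 : Matrix (Fin v) (Fin v) ℝ) - X.adjMatrix ℝ).submatrix
          (fun x : {x // ¬ p x} => (x : Fin v)) (fun x : {x // ¬ p x} => (x : Fin v)) := by
    ext x y
    by_cases hxy : x = y
    · subst hxy; simp [Matrix.one_apply]
    · have hval : (x : Fin v) ≠ (y : Fin v) := fun hc => hxy (Subtype.ext hc)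
      simp [Matrix.one_apply, hxy, hval]
  have hDdet : ((t • (1 : Matrix (Fin v) (Fin v) ℝ) - X.adjMatrix ℝ).submatrix
      (fun x : {x // ¬ p x} => (x : Fin v)) (fun x : {x // ¬ p x} => (x : Fin v))).det ≠ 0 := by
    rw [← hsub]
    exact det_ne X h (fun x => ¬ p x) t ht
  rw [hsub]
  rw [jacobi p _ (Nmat X (k := k) (a := a) (c := c) t) (MN X h t hD) hDdet]
  congr 1
  -- compute the 2×2 determinant
  have hiS : p i := by simp [hp, hS]
  have hjS : p j := by simp [hp, hS]
  set x0 : {x // p x} := ⟨i, hiS⟩ with hx0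
  set x1 : {x // p x} := ⟨j, hjS⟩ with hx1
  have hbij : Function.Bijective (fun m : Fin 2 => if m = 0 then x0 else x1) := by
    constructor
    · intro m m' hmm'
      fin_cases m <;> fin_cases m' <;> simp_all
    · intro y
      have : (y : Fin v) ∈ S := y.2
      rw [hS, Finset.mem_insert, Finset.mem_singleton] at this
      rcases this with h' | h'
      · exact ⟨0, by simp only [if_pos rfl]; exact Subtype.ext h'.symm⟩
      · refine ⟨1, ?_⟩
        show (if (1 : Fin 2) = 0 then x0 else x1) = y
        rw [if_neg (by decide)]
        exact Subtype.ext h'.symm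
  set e2 : Fin 2 ≃ {x // p x} := Equiv.ofBijective _ hbij with he2
  have hdet2 := Matrix.det_submatrix_equiv_self e2
    ((Nmat X (k := k) (a := a) (c := c) t).submatrix
      (fun x : {x // p x} => (x : Fin v)) (fun x : {x // p x} => (x : Fin v)))
  have goal2 : (((Nmat X (k := k) (a := a) (c := c) t).submatrix
      (fun x : {x // p x} => (x : Fin v)) (fun x : {x // p x} => (x : Fin v))).submatrix
        e2 e2).det
      = αf k a c t ^ 2 - (if X.Adj i j then βf k a c t else γf k a c t) ^ 2 := by
    rw [Matrix.det_fin_two]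
    have h00 : e2 0 = x0 := by
      show (if (0 : Fin 2) = 0 then x0 else x1) = x0
      rw [if_pos rfl]
    have h11 : e2 1 = x1 := by
      show (if (1 : Fin 2) = 0 then x0 else x1) = x1
      rw [if_neg (by decide)]
    simp only [Matrix.submatrix_apply, h00, h11]
    have hadjji : X.Adj j i ↔ X.Adj i j := by rw [adj_comm]
    rw [Nmat_apply, Nmat_apply, Nmat_apply, Nmat_apply]
    rw [if_pos rfl, if_pos rfl, if_neg hij, if_neg hij.symm]
    by_cases hA : X.Adj i j
    · rw [if_pos hA, if_pos (hadjji.mpr hA)]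
      ring
    · rw [if_neg hA, if_neg (fun h' => hA (hadjji.mp h'))]
      ring
  convert hdet2.symm.trans goal2 using 2

end Key

end SRGAux

/-- If `X` is strongly regular and `i ≠ j`, `i' ≠ j'` are pairs of vertices that are
either both adjacent or both non-adjacent, then `φ(X \ {i,j}, t) = φ(X \ {i',j'}, t)`. -/
theorem srg_pair_deleted_charpoly {v k a c : ℕ} (X : SimpleGraph (Fin v))
    [DecidableRel X.Adj] (h : X.IsSRGWith v k a c)
    (i j i' j' : Fin v) (hij : i ≠ j) (hij' : i' ≠ j')
    (hadj : X.Adj i j ↔ X.Adj i' j') :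
    ((X.adjMatrix ℝ).submatrix
        (fun x : ↥(({i, j} : Finset (Fin v))ᶜ) => (x : Fin v))
        (fun x : ↥(({i, j} : Finset (Fin v))ᶜ) => (x : Fin v))).charpoly
      = ((X.adjMatrix ℝ).submatrix
        (fun x : ↥(({i', j'} : Finset (Fin v))ᶜ) => (x : Fin v))
        (fun x : ↥(({i', j'} : Finset (Fin v))ᶜ) => (x : Fin v))).charpoly := by
  classical
  apply Polynomial.eq_of_infinite_eval_eq
  have hfin : {t : ℝ | (DP k a c).IsRoot t}.Finite :=
    Polynomial.finite_setOf_isRoot (DP_ne_zero k a c)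
  have hinf : (Set.Ioi (k:ℝ) \ {t : ℝ | (DP k a c).IsRoot t}).Infinite :=
    (Set.Ioi_infinite _).diff hfin
  apply hinf.mono
  intro t ht
  obtain ⟨ht1, ht2⟩ := ht
  have htk : (k:ℝ) < t := ht1
  have hD : Df k a c t ≠ 0 := by
    rw [← DP_eval]
    exact fun hc => ht2 hc
  simp only [Set.mem_setOf_eq]
  rw [key X h i j hij t htk hD, key X h i' j' hij' t htk hD]
  congr 2
  simp only [hadj]
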